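/- Let s and t be coprime positive integers and n, m integers with 0 < n < s and 0 < m < t. For every τ ∈ ℂ with Im τ > 0 (writing q^x := exp(2πiτx)), Σ_{k∈ℤ} |k| ( q^{(2stk−nt−ms)²/(4st)} − q^{(2stk−nt+ms)²/(4st)} ) = (1/(st)) · ( Φ̃(τ) + ((nt−ms)/2)·Ψ̃^{(nt−ms)}(τ) − ((nt+ms)/2)·Ψ̃^{(nt+ms)}(τ) ), where Φ̃(τ) := −(1/2) Σ_{k=0}^{∞} k·χ(k)·q^{k²/(4st)} and Ψ̃^{(a)}(τ) := Σ_{k=0}^{∞} ψ_{2st}^{(a)}(k)·q^{k²/(4st)}. -/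

import Mathlib

open Complex Finset

/-- `Q τ x = q^x = exp(2πiτx)` for real `x`. -/
noncomputable def Q (τ : ℂ) (x : ℝ) : ℂ := Complex.exp (2 * Real.pi * Complex.I * τ * x)

/-- The 2st-periodic function `χ_{2st}^{(n,m)}`. -/
def chi (s t n m k : ℤ) : ℤ :=
  if k ≡ n * t - m * s [ZMOD 2 * s * t] ∨ k ≡ -(n * t - m * s) [ZMOD 2 * s * t] then 1
  else if k ≡ n * t + m * s [ZMOD 2 * s * t] ∨ k ≡ -(n * t + m * s) [ZMOD 2 * s * t] then -1
  else 0

/-- The 2st-periodic function `ψ_{2st}^{(a)}` (with modulus `M = 2st`). -/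
def psi (M a k : ℤ) : ℤ :=
  if k ≡ a [ZMOD M] then 1 else if k ≡ -a [ZMOD M] then -1 else 0

/-- The Eichler integral `Φ̃_{s,t}^{(n,m)}(τ)`. -/
noncomputable def PhiT (s t n m : ℤ) (τ : ℂ) : ℂ :=
  -(1 / 2) * ∑' k : ℕ, (k : ℂ) * (chi s t n m k : ℂ) * Q τ ((k : ℝ) ^ 2 / (4 * s * t))

/-- The Eichler integral `Ψ̃_{st}^{(a)}(τ)`. -/
noncomputable def PsiT (s t a : ℤ) (τ : ℂ) : ℂ :=
  ∑' k : ℕ, (psi (2 * s * t) a k : ℂ) * Q τ ((k : ℝ) ^ 2 / (4 * s * t))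

/-! ### Auxiliary lemmas -/

lemma normQ (τ : ℂ) (x : ℝ) : ‖Q τ x‖ = Real.exp (-(2 * Real.pi * τ.im * x)) := by
  rw [Q, Complex.norm_exp]
  congr 1
  simp [Complex.mul_re, Complex.mul_im]

lemma summable_exp_sq {ε : ℝ} (hε : 0 < ε) (C : ℝ) (hC : 0 ≤ C) :
    Summable (fun j : ℕ => ((j : ℝ) + C) * Real.exp (-(ε * (j : ℝ) ^ 2))) := by
  have hr : ‖Real.exp (-ε)‖ < 1 := by
    rw [Real.norm_eq_abs, abs_of_pos (Real.exp_pos _)]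
    exact Real.exp_lt_one_iff.mpr (by linarith)
  have h1 : Summable (fun j : ℕ => ((j : ℝ) + C) * Real.exp (-ε) ^ j) := by
    have := (summable_pow_mul_geometric_of_norm_lt_one 1 hr).add
      (((summable_geometric_of_norm_lt_one hr).mul_left C))
    simpa [pow_one, add_mul] using this
  refine Summable.of_nonneg_of_le (fun j => ?_) (fun j => ?_) h1
  · positivity
  · have hj : (j : ℝ) ≤ (j : ℝ) ^ 2 := by
      rcases Nat.eq_zero_or_pos j with h | h
      · simp [h]
      · have h1j : (1:ℝ) ≤ (j:ℝ) := by exact_mod_cast h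
        nlinarith
    have : Real.exp (-(ε * (j:ℝ)^2)) ≤ Real.exp (-ε) ^ j := by
      rw [← Real.exp_nat_mul]
      exact Real.exp_le_exp.mpr (by nlinarith)
    have hjC : 0 ≤ (j : ℝ) + C := by positivity
    nlinarith [Real.exp_pos (-(ε * (j:ℝ)^2))]

lemma summable_Q {s t : ℤ} (hs : 0 < s) (ht : 0 < t) {τ : ℂ} (hτ : 0 < τ.im)
    (u : ℕ → ℂ) (C : ℝ) (hC : 0 ≤ C) (hu : ∀ j, ‖u j‖ ≤ (j : ℝ) + C) :
    Summable (fun j : ℕ => u j * Q τ ((j : ℝ) ^ 2 / (4 * s * t))) := by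
  have hst : (0:ℝ) < 4 * (s:ℝ) * t := by
    have : (0:ℝ) < (s:ℝ) := by exact_mod_cast hs
    have : (0:ℝ) < (t:ℝ) := by exact_mod_cast ht
    positivity
  have hε : 0 < 2 * Real.pi * τ.im / (4 * (s:ℝ) * t) := by
    have := Real.pi_pos
    positivity
  refine Summable.of_norm_bounded (summable_exp_sq hε C hC) (fun j => ?_)
  rw [norm_mul, normQ]
  have h2 : -(2 * Real.pi * τ.im * ((j:ℝ)^2 / (4 * s * t)))
      = -(2 * Real.pi * τ.im / (4 * (s:ℝ) * t) * (j:ℝ)^2) := by ring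
  rw [h2]
  exact mul_le_mul_of_nonneg_right (hu j) (Real.exp_pos _).le

/-- The weight function for the reindexed series. -/
def w (M c : ℤ) (j : ℕ) : ℤ :=
  if (j:ℤ) ≡ c [ZMOD M] then ((j:ℤ) - c) / M
  else if (j:ℤ) ≡ -c [ZMOD M] then ((j:ℤ) + c) / M else 0

lemma w_apply {M c : ℤ} (hM : 0 < M) (h2c : ¬ M ∣ 2 * c) (hc1 : -M < c) (hc2 : c < M)
    (k : ℤ) : w M c (M * k - c).natAbs = |k| := by
  have hMne : M ≠ 0 := hM.ne'
  rcases le_or_gt c (M * k) with h | h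
  · have hj : ((M * k - c).natAbs : ℤ) = M * k - c := by
      rw [Int.natCast_natAbs, _root_.abs_of_nonneg (by linarith : (0:ℤ) ≤ M * k - c)]
    have hn1 : ¬ ((M * k - c).natAbs : ℤ) ≡ c [ZMOD M] := by
      intro hcon
      rw [hj] at hcon
      have h1 : M ∣ c - (M * k - c) := hcon.dvd
      refine h2c ⟨(c - (M * k - c)) / M + k, ?_⟩
      rw [mul_add, Int.mul_ediv_cancel' h1]
      ring
    have hn2 : ((M * k - c).natAbs : ℤ) ≡ -c [ZMOD M] := by
      rw [hj, Int.modEq_iff_dvd]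
      exact ⟨-k, by ring⟩
    rw [w, if_neg hn1, if_pos hn2, hj]
    have hk0 : 0 ≤ k := by nlinarith
    rw [_root_.abs_of_nonneg hk0]
    have h5 : M * k - c + c = M * k := by ring
    rw [h5, Int.mul_ediv_cancel_left _ hMne]
  · have hj : ((M * k - c).natAbs : ℤ) = c - M * k := by
      rw [Int.natCast_natAbs, _root_.abs_of_neg (by linarith : M * k - c < 0)]; ring
    have hn1 : ((M * k - c).natAbs : ℤ) ≡ c [ZMOD M] := by
      rw [hj, Int.modEq_iff_dvd]
      exact ⟨k, by ring⟩
    rw [w, if_pos hn1, hj]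
    have hk0 : k ≤ 0 := by nlinarith
    rw [_root_.abs_of_nonpos hk0]
    have h5 : c - M * k - c = M * (-k) := by ring
    rw [h5, Int.mul_ediv_cancel_left _ hMne]

lemma w_support {M c : ℤ} (j : ℕ) (hj : w M c j ≠ 0) : ∃ k : ℤ, (M * k - c).natAbs = j := by
  rw [w] at hj
  by_cases h1 : (j:ℤ) ≡ c [ZMOD M]
  · obtain ⟨k, hk⟩ := h1.dvd
    refine ⟨k, ?_⟩
    have h3 : M * k - c = -(j:ℤ) := by linarith
    rw [h3]
    simp
  · rw [if_neg h1] at hj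
    by_cases h2 : (j:ℤ) ≡ -c [ZMOD M]
    · obtain ⟨k, hk⟩ := h2.dvd
      refine ⟨-k, ?_⟩
      have h3 : M * (-k) - c = (j:ℤ) := by linarith
      rw [h3]
      simp
    · simp [if_neg h2] at hj

lemma w_bound {M c : ℤ} (hM : 0 < M) (hc1 : -M < c) (hc2 : c < M) (j : ℕ) :
    |w M c j| ≤ (j : ℤ) + M := by
  have hcM : |c| ≤ M := by rw [abs_le]; constructor <;> linarith
  rw [w]
  split_ifs with h1 h2
  · calc |((j:ℤ) - c) / M| ≤ |(j:ℤ) - c| := Int.abs_ediv_le_abs _ _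
      _ ≤ |(j:ℤ)| + |c| := abs_sub _ _
      _ ≤ (j:ℤ) + M := by simp [abs_of_nonneg (Int.ofNat_nonneg j)]; linarith
  · calc |((j:ℤ) + c) / M| ≤ |(j:ℤ) + c| := Int.abs_ediv_le_abs _ _
      _ ≤ |(j:ℤ)| + |c| := abs_add_le _ _
      _ ≤ (j:ℤ) + M := by simp [abs_of_nonneg (Int.ofNat_nonneg j)]; linarith
  · simp; positivity

lemma i_injective {M c : ℤ} (hM : 0 < M) (h2c : ¬ M ∣ 2 * c) :
    Function.Injective (fun k : ℤ => (M * k - c).natAbs) := by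
  intro k k' h
  rcases Int.natAbs_eq_natAbs_iff.mp h with h | h
  · have h2 : M * k = M * k' := by linarith
    exact mul_left_cancel₀ hM.ne' h2
  · exact absurd ⟨k + k', by linarith⟩ h2c

lemma g_support {M c : ℤ} (τ : ℂ) (d : ℝ) :
    Function.support (fun j : ℕ => ((w M c j : ℤ) : ℂ) * Q τ ((j:ℝ)^2 / d))
      ⊆ Set.range (fun k : ℤ => (M * k - c).natAbs) := by
  intro j hj
  have hw : w M c j ≠ 0 := by
    intro h0
    apply hj
    simp [h0]
  exact w_support j hw

lemma g_comp {M c : ℤ} (hM : 0 < M) (h2c : ¬ M ∣ 2 * c) (hc1 : -M < c) (hc2 : c < M)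
    (τ : ℂ) (d : ℝ) (k : ℤ) :
    ((w M c ((M * k - c).natAbs) : ℤ) : ℂ) * Q τ ((((M * k - c).natAbs : ℕ) : ℝ)^2 / d)
      = ((|k| : ℤ) : ℂ) * Q τ (((M * k - c : ℤ) : ℝ)^2 / d) := by
  rw [w_apply hM h2c hc1 hc2]
  have h1 : ((((M * k - c).natAbs : ℕ)) : ℝ)^2 = ((M * k - c : ℤ) : ℝ)^2 := by
    rw [Nat.cast_natAbs, Int.cast_abs, _root_.sq_abs]
  rw [h1]

lemma reindex {M c : ℤ} (hM : 0 < M) (h2c : ¬ M ∣ 2 * c) (hc1 : -M < c) (hc2 : c < M)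
    (τ : ℂ) (d : ℝ) :
    ∑' k : ℤ, ((|k| : ℤ) : ℂ) * Q τ (((M * k - c : ℤ) : ℝ)^2 / d)
      = ∑' j : ℕ, ((w M c j : ℤ) : ℂ) * Q τ ((j : ℝ)^2 / d) := by
  rw [← Function.Injective.tsum_eq (i_injective hM h2c) (g_support τ d)]
  exact tsum_congr (fun k => (g_comp hM h2c hc1 hc2 τ d k).symm)

lemma summable_int {M c : ℤ} (hM : 0 < M) (h2c : ¬ M ∣ 2 * c) (hc1 : -M < c) (hc2 : c < M)
    {τ : ℂ} (d : ℝ)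
    (hg : Summable (fun j : ℕ => ((w M c j : ℤ) : ℂ) * Q τ ((j : ℝ)^2 / d))) :
    Summable (fun k : ℤ => ((|k| : ℤ) : ℂ) * Q τ (((M * k - c : ℤ) : ℝ)^2 / d)) := by
  have hsupp : ∀ x ∉ Set.range (fun k : ℤ => (M * k - c).natAbs),
      ((w M c x : ℤ) : ℂ) * Q τ ((x : ℝ)^2 / d) = 0 := by
    intro x hx
    by_contra h0
    exact hx (g_support τ d (Function.mem_support.mpr h0))
  have h2 := (Function.Injective.summable_iff (i_injective hM h2c) hsupp).mpr hg
  exact h2.congr (fun k => by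
    simpa [Function.comp] using g_comp hM h2c hc1 hc2 τ d k)

lemma hsn' {s n : ℤ} (hn : 0 < n) (hns : n < s) : ¬ s ∣ n :=
  fun h => absurd (Int.le_of_dvd hn h) (not_le.mpr hns)

lemma cancel2 {s t x : ℤ} (h : 2 * s * t ∣ 2 * x) : s * t ∣ x := by
  obtain ⟨q, hq⟩ := h
  exact ⟨q, by linarith⟩

lemma hdvd_a {s t n m : ℤ} (hst : IsCoprime s t) (hn : 0 < n) (hns : n < s) :
    ¬ (2 * s * t ∣ 2 * (n * t - m * s)) := by
  intro h
  have h1 : s * t ∣ n * t - m * s := cancel2 h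
  have h2 : s ∣ n * t - m * s := dvd_trans (Dvd.intro t rfl) h1
  have h3 : s ∣ n * t := by
    have h4 : s ∣ m * s := Dvd.intro m (mul_comm s m)
    have := dvd_add h2 h4
    simpa using this
  exact hsn' hn hns (hst.dvd_of_dvd_mul_right h3)

lemma hdvd_b {s t n m : ℤ} (hst : IsCoprime s t) (hn : 0 < n) (hns : n < s) :
    ¬ (2 * s * t ∣ 2 * (n * t + m * s)) := by
  intro h
  have h1 : s * t ∣ n * t + m * s := cancel2 h
  have h2 : s ∣ n * t + m * s := dvd_trans (Dvd.intro t rfl) h1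
  have h3 : s ∣ n * t := by
    have h4 : s ∣ m * s := Dvd.intro m (mul_comm s m)
    have := dvd_sub h2 h4
    simpa using this
  exact hsn' hn hns (hst.dvd_of_dvd_mul_right h3)

lemma hdvd_ab {s t m : ℤ} (hst : IsCoprime s t) (hm : 0 < m) (hmt : m < t) :
    ¬ (2 * s * t ∣ 2 * (m * s)) := by
  intro h
  have h1 : s * t ∣ m * s := cancel2 h
  have h2 : t ∣ m * s := dvd_trans (Dvd.intro_left s rfl) h1
  exact hsn' hm hmt (hst.symm.dvd_of_dvd_mul_right h2)

lemma hdvd_ab' {s t n : ℤ} (hst : IsCoprime s t) (hn : 0 < n) (hns : n < s) :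
    ¬ (2 * s * t ∣ 2 * (n * t)) := by
  intro h
  have h1 : s * t ∣ n * t := cancel2 h
  have h2 : s ∣ n * t := dvd_trans (Dvd.intro t rfl) h1
  exact hsn' hn hns (hst.dvd_of_dvd_mul_right h2)

lemma termwise (s t n m : ℤ)
    (hA : ¬ (2*s*t ∣ 2*(n*t - m*s))) (hB : ¬ (2*s*t ∣ 2*(n*t + m*s)))
    (hAB : ¬ (2*s*t ∣ 2*(m*s))) (hAB' : ¬ (2*s*t ∣ 2*(n*t))) (j : ℕ) :
    -(j:ℤ) * chi s t n m j + (n*t - m*s) * psi (2*s*t) (n*t - m*s) j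
      - (n*t + m*s) * psi (2*s*t) (n*t + m*s) j
    = 2*s*t * w (2*s*t) (n*t + m*s) j - 2*s*t * w (2*s*t) (n*t - m*s) j := by
  by_cases h1 : (j:ℤ) ≡ n * t - m * s [ZMOD 2 * s * t]
  · have n3 : ¬ ((j:ℤ) ≡ n * t + m * s [ZMOD 2 * s * t]) := by
      intro h3
      exact hAB (by have hd := (h1.symm.trans h3).dvd; convert hd using 1; ring)
    have n4 : ¬ ((j:ℤ) ≡ -(n * t + m * s) [ZMOD 2 * s * t]) := by
      intro h4
      refine hAB' (Int.dvd_neg.mp ?_)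
      have hd := (h1.symm.trans h4).dvd; convert hd using 1; ring
    have hd1 : 2*s*t * (((j:ℤ) - (n * t - m * s)) / (2*s*t)) = (j:ℤ) - (n * t - m * s) :=
      Int.mul_ediv_cancel' h1.symm.dvd
    rw [chi, psi, psi, w, w, if_pos (Or.inl h1), if_pos h1, if_neg n3, if_neg n4,
      if_neg n3, if_neg n4, if_pos h1]
    linarith
  · by_cases h2 : (j:ℤ) ≡ -(n * t - m * s) [ZMOD 2 * s * t]
    · have n3 : ¬ ((j:ℤ) ≡ n * t + m * s [ZMOD 2 * s * t]) := by
        intro h3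
        exact hAB' (by have hd := (h2.symm.trans h3).dvd; convert hd using 1; ring)
      have n4 : ¬ ((j:ℤ) ≡ -(n * t + m * s) [ZMOD 2 * s * t]) := by
        intro h4
        refine hAB (Int.dvd_neg.mp ?_)
        have hd := (h2.symm.trans h4).dvd; convert hd using 1; ring
      have hd2 : 2*s*t * (((j:ℤ) + (n * t - m * s)) / (2*s*t)) = (j:ℤ) + (n * t - m * s) :=
        Int.mul_ediv_cancel' (by have := h2.symm.dvd; convert this using 1; ring)
      rw [chi, psi, psi, w, w, if_pos (Or.inr h2), if_neg h1, if_pos h2, if_neg n3,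
        if_neg n4, if_neg n3, if_neg n4, if_neg h1, if_pos h2]
      linarith
    · by_cases h3 : (j:ℤ) ≡ n * t + m * s [ZMOD 2 * s * t]
      · have n4 : ¬ ((j:ℤ) ≡ -(n * t + m * s) [ZMOD 2 * s * t]) := by
          intro h4
          refine hB (Int.dvd_neg.mp ?_)
          have hd := (h3.symm.trans h4).dvd; convert hd using 1; ring
        have hd3 : 2*s*t * (((j:ℤ) - (n * t + m * s)) / (2*s*t)) = (j:ℤ) - (n * t + m * s) :=
          Int.mul_ediv_cancel' h3.symm.dvd
        rw [chi, psi, psi, w, w, if_neg (not_or.mpr ⟨h1, h2⟩), if_pos (Or.inl h3),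
          if_neg h1, if_neg h2, if_pos h3, if_pos h3, if_neg h1, if_neg h2]
        linarith
      · by_cases h4 : (j:ℤ) ≡ -(n * t + m * s) [ZMOD 2 * s * t]
        · have hd4 : 2*s*t * (((j:ℤ) + (n * t + m * s)) / (2*s*t)) = (j:ℤ) + (n * t + m * s) :=
            Int.mul_ediv_cancel' (by have := h4.symm.dvd; convert this using 1; ring)
          rw [chi, psi, psi, w, w, if_neg (not_or.mpr ⟨h1, h2⟩), if_pos (Or.inr h4),
            if_neg h1, if_neg h2, if_neg h3, if_pos h4, if_neg h3, if_pos h4,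
            if_neg h1, if_neg h2]
          linarith
        · rw [chi, psi, psi, w, w, if_neg (not_or.mpr ⟨h1, h2⟩),
            if_neg (not_or.mpr ⟨h3, h4⟩), if_neg h1, if_neg h2, if_neg h3, if_neg h4,
            if_neg h3, if_neg h4, if_neg h1, if_neg h2]
          ring

lemma chi_norm (s t n m : ℤ) (j : ℕ) : ‖((chi s t n m j : ℤ) : ℂ)‖ ≤ 1 := by
  rw [chi]
  split_ifs <;> simp

lemma psi_norm (M a : ℤ) (j : ℕ) : ‖((psi M a j : ℤ) : ℂ)‖ ≤ 1 := by
  rw [psi]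
  split_ifs <;> simp

theorem statement6 (s t n m : ℤ) (hs : 0 < s) (ht : 0 < t) (hst : IsCoprime s t)
    (hn : 0 < n) (hns : n < s) (hm : 0 < m) (hmt : m < t)
    (τ : ℂ) (hτ : 0 < τ.im) :
    ∑' k : ℤ, ((|k| : ℤ) : ℂ) *
        (Q τ (((2 * s * t * k - n * t - m * s : ℤ) : ℝ) ^ 2 / (4 * s * t))
          - Q τ (((2 * s * t * k - n * t + m * s : ℤ) : ℝ) ^ 2 / (4 * s * t))) =
      (1 / (s * t : ℂ)) *
        (PhiT s t n m τ + ((n * t - m * s : ℤ) : ℂ) / 2 * PsiT s t (n * t - m * s) τ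
          - ((n * t + m * s : ℤ) : ℂ) / 2 * PsiT s t (n * t + m * s) τ) := by
  have hM : (0:ℤ) < 2 * s * t := by positivity
  have hA := hdvd_a (m := m) hst hn hns
  have hB := hdvd_b (m := m) hst hn hns
  have hABd := hdvd_ab (s := s) hst hm hmt
  have hABd' := hdvd_ab' (t := t) hst hn hns
  have ha1 : -(2*s*t) < n * t - m * s := by nlinarith
  have ha2 : n * t - m * s < 2*s*t := by nlinarith
  have hb1 : -(2*s*t) < n * t + m * s := by nlinarith
  have hb2 : n * t + m * s < 2*s*t := by nlinarith
  -- summability of the weighted series on ℕ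
  have hwsum : ∀ c : ℤ, -(2*s*t) < c → c < 2*s*t →
      Summable (fun j : ℕ => ((w (2*s*t) c j : ℤ) : ℂ) * Q τ ((j : ℝ)^2 / (4 * s * t))) := by
    intro c hc1 hc2
    refine summable_Q hs ht hτ _ ((2*s*t : ℤ) : ℝ) (by positivity) (fun j => ?_)
    have h1 := w_bound hM hc1 hc2 j
    rw [Complex.norm_intCast]
    have h2 : |((w (2*s*t) c j : ℤ) : ℝ)| = ((|w (2*s*t) c j| : ℤ) : ℝ) := by
      rw [Int.cast_abs]
    rw [h2]
    exact_mod_cast h1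
  have hga := hwsum (n * t - m * s) ha1 ha2
  have hgb := hwsum (n * t + m * s) hb1 hb2
  -- summability of the three pieces for the right-hand side
  have hu1 : Summable (fun j : ℕ =>
      (j : ℂ) * ((chi s t n m j : ℤ) : ℂ) * Q τ ((j : ℝ)^2 / (4 * s * t))) := by
    refine summable_Q hs ht hτ _ 1 zero_le_one (fun j => ?_)
    rw [norm_mul]
    calc ‖(j:ℂ)‖ * ‖((chi s t n m j : ℤ) : ℂ)‖ ≤ (j:ℝ) * 1 := by
          refine mul_le_mul ?_ (chi_norm s t n m j) (norm_nonneg _) (Nat.cast_nonneg j)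
          simp
      _ ≤ (j:ℝ) + 1 := by linarith
  have hu2 : Summable (fun j : ℕ =>
      ((psi (2*s*t) (n * t - m * s) j : ℤ) : ℂ) * Q τ ((j : ℝ)^2 / (4 * s * t))) := by
    refine summable_Q hs ht hτ _ 1 zero_le_one (fun j => ?_)
    have := psi_norm (2*s*t) (n * t - m * s) j
    have h0 : (0:ℝ) ≤ (j:ℝ) := Nat.cast_nonneg j
    linarith
  have hu3 : Summable (fun j : ℕ =>
      ((psi (2*s*t) (n * t + m * s) j : ℤ) : ℂ) * Q τ ((j : ℝ)^2 / (4 * s * t))) := by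
    refine summable_Q hs ht hτ _ 1 zero_le_one (fun j => ?_)
    have := psi_norm (2*s*t) (n * t + m * s) j
    have h0 : (0:ℝ) ≤ (j:ℝ) := Nat.cast_nonneg j
    linarith
  -- summability on ℤ
  have hfa := summable_int hM hA ha1 ha2 (4 * (s:ℝ) * (t:ℝ)) hga
  have hfb := summable_int hM hB hb1 hb2 (4 * (s:ℝ) * (t:ℝ)) hgb
  -- rewrite the left-hand side
  have step1 : ∑' k : ℤ, ((|k| : ℤ) : ℂ) *
        (Q τ (((2 * s * t * k - n * t - m * s : ℤ) : ℝ) ^ 2 / (4 * s * t))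
          - Q τ (((2 * s * t * k - n * t + m * s : ℤ) : ℝ) ^ 2 / (4 * s * t)))
      = ∑' k : ℤ, (((|k| : ℤ) : ℂ) * Q τ (((2*s*t*k - (n*t+m*s) : ℤ) : ℝ)^2 / (4 * s * t))
          - ((|k| : ℤ) : ℂ) * Q τ (((2*s*t*k - (n*t-m*s) : ℤ) : ℝ)^2 / (4 * s * t))) := by
    refine tsum_congr (fun k => ?_)
    have e1 : ((2 * s * t * k - n * t - m * s : ℤ) : ℝ) = ((2*s*t*k - (n*t+m*s) : ℤ) : ℝ) := by
      push_cast; ring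
    have e2 : ((2 * s * t * k - n * t + m * s : ℤ) : ℝ) = ((2*s*t*k - (n*t-m*s) : ℤ) : ℝ) := by
      push_cast; ring
    rw [mul_sub, e1, e2]
  rw [step1, Summable.tsum_sub hfb hfa,
    reindex hM hB hb1 hb2 τ (4 * (s:ℝ) * (t:ℝ)),
    reindex hM hA ha1 ha2 τ (4 * (s:ℝ) * (t:ℝ)),
    ← Summable.tsum_sub hgb hga]
  -- termwise identity
  have hstC : ((s:ℂ)) ≠ 0 := by exact_mod_cast hs.ne'
  have htC : ((t:ℂ)) ≠ 0 := by exact_mod_cast ht.ne'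
  have hterm : ∀ j : ℕ,
      ((w (2*s*t) (n*t+m*s) j : ℤ) : ℂ) * Q τ ((j : ℝ)^2 / (4 * s * t))
        - ((w (2*s*t) (n*t-m*s) j : ℤ) : ℂ) * Q τ ((j : ℝ)^2 / (4 * s * t))
      = (-(1/(2*(s:ℂ)*(t:ℂ)))) * ((j : ℂ) * ((chi s t n m j : ℤ) : ℂ) * Q τ ((j : ℝ)^2 / (4 * s * t)))
        + (((n*t-m*s : ℤ) : ℂ)/(2*(s:ℂ)*(t:ℂ))) * (((psi (2*s*t) (n*t-m*s) j : ℤ) : ℂ) * Q τ ((j : ℝ)^2 / (4 * s * t)))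
        + (-(((n*t+m*s : ℤ) : ℂ)/(2*(s:ℂ)*(t:ℂ)))) * (((psi (2*s*t) (n*t+m*s) j : ℤ) : ℂ) * Q τ ((j : ℝ)^2 / (4 * s * t))) := by
    intro j
    have hint := termwise s t n m hA hB hABd hABd' j
    have hc : ((-(j:ℤ) * chi s t n m j + (n*t - m*s) * psi (2*s*t) (n*t - m*s) j
        - (n*t + m*s) * psi (2*s*t) (n*t + m*s) j : ℤ) : ℂ)
        = ((2*s*t * w (2*s*t) (n*t + m*s) j - 2*s*t * w (2*s*t) (n*t - m*s) j : ℤ) : ℂ) := by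
      exact_mod_cast congrArg (fun z : ℤ => (z : ℂ)) hint
    push_cast at hc
    have h2st : (2*(s:ℂ)*(t:ℂ)) ≠ 0 := mul_ne_zero (mul_ne_zero two_ne_zero hstC) htC
    have hco : ((w (2*s*t) (n*t+m*s) j : ℤ) : ℂ) - ((w (2*s*t) (n*t-m*s) j : ℤ) : ℂ)
        = (-((j : ℂ) * ((chi s t n m j : ℤ) : ℂ))
            + ((n*t-m*s : ℤ) : ℂ) * ((psi (2*s*t) (n*t-m*s) j : ℤ) : ℂ)
            - ((n*t+m*s : ℤ) : ℂ) * ((psi (2*s*t) (n*t+m*s) j : ℤ) : ℂ)) / (2*(s:ℂ)*(t:ℂ)) := by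
      rw [eq_div_iff h2st]
      push_cast
      linear_combination -hc
    linear_combination (Q τ ((j : ℝ)^2 / (4 * s * t))) * hco
  rw [tsum_congr hterm]
  rw [Summable.tsum_add ((hu1.mul_left _).add (hu2.mul_left _)) (hu3.mul_left _),
    Summable.tsum_add (hu1.mul_left _) (hu2.mul_left _),
    tsum_mul_left, tsum_mul_left, tsum_mul_left]
  rw [PhiT, PsiT, PsiT]
  push_cast
  ring
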